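/- Suppose K := A a² + D(b² − c²) > 0 and set k = K/(2Dbc), x̂ = √(1/2 + k²/(2√(k² + k⁴))), and T(k) = (Dbc(k + √(1/(1+k²)) + k³/√(k² + k⁴)) + D c²) / (1/2 + k²/(2√(k² + k⁴))). Then: (i) if A a² + C a² ≤ 2Dbck + D c², then x = 1 is a maximizer of γ on [0,1] and the maximum value is A a² + C a²; (ii) if 2Dbck + D c² < A a² + C a² < T(k), then x = c√D / √((a√C − b√D)² + D c²) is a maximizer of γ on [0,1] and the maximum value is D(A + C)a²c² / ((a√C − b√D)² + D c²); (iii) if A a² + C a² ≥ T(k), then x = x̂ is a maximizer of γ on [0,1] and the maximum value is Dbc(k + √(1/(1+k²)) + k³/√(k² + k⁴)) + D c². -/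

import Mathlib

lemma aux_cs (u v : ℝ) (hu0 : 0 ≤ u) (hu1 : u ≤ 1) (hv0 : 0 ≤ v) (hv1 : v ≤ 1) :
    2*u*Real.sqrt (1 - u^2) * (2*v*Real.sqrt (1 - v^2)) ≤ 2*u^2 + 2*v^2 - 4*u^2*v^2 := by
  have h1 : (0:ℝ) ≤ 1 - u^2 := by nlinarith
  have h2 : (0:ℝ) ≤ 1 - v^2 := by nlinarith
  have s1 := Real.sq_sqrt h1
  have s2 := Real.sq_sqrt h2
  nlinarith [sq_nonneg (u*Real.sqrt (1 - v^2) - v*Real.sqrt (1 - u^2)),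
    Real.sqrt_nonneg (1-u^2), Real.sqrt_nonneg (1-v^2)]

lemma aux_max (k u : ℝ) (hk : 0 < k) (hu0 : 0 ≤ u) (hu1 : u ≤ 1) :
    2*k*u^2 + 2*u*Real.sqrt (1 - u^2) ≤ k + Real.sqrt (1 + k^2) := by
  set r := Real.sqrt (1 + k^2) with hr
  have hr2 : r^2 = 1 + k^2 := Real.sq_sqrt (by positivity)
  have hrpos : 0 < r := Real.sqrt_pos.2 (by positivity)
  have hkr : k ≤ r := by
    calc k = Real.sqrt (k^2) := (Real.sqrt_sq hk.le).symm
      _ ≤ r := Real.sqrt_le_sqrt (by linarith)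
  have h1 : (0:ℝ) ≤ 1 - u^2 := by nlinarith
  have hY : 0 ≤ r - k*(2*u^2 - 1) := by nlinarith [mul_nonneg hk.le h1]
  have key : 2*u*Real.sqrt (1 - u^2) ≤ r - k*(2*u^2 - 1) := by
    have e1 : 2*u*Real.sqrt (1 - u^2) = Real.sqrt (4*u^2*(1 - u^2)) := by
      rw [show 4*u^2*(1-u^2) = (2*u)^2 * (1-u^2) by ring, Real.sqrt_mul (by positivity),
        Real.sqrt_sq (by linarith)]
    rw [e1]
    have h4 : 4*u^2*(1-u^2) ≤ (r - k*(2*u^2-1))^2 := by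
      nlinarith [sq_nonneg (k - r*(2*u^2-1)), sq_nonneg (2*u^2-1)]
    calc Real.sqrt (4*u^2*(1-u^2)) ≤ Real.sqrt ((r - k*(2*u^2-1))^2) := Real.sqrt_le_sqrt h4
      _ = r - k*(2*u^2-1) := Real.sqrt_sq hY
  linarith

lemma aux_tangent (k u v : ℝ) (hk : 0 < k) (hu0 : 0 ≤ u) (hu1 : u ≤ 1)
    (hv0 : 0 ≤ v) (hv1 : v ≤ 1)
    (hw : 0 < v * Real.sqrt (1 - v^2))
    (hslope : 2*k*(v*Real.sqrt (1 - v^2)) ≤ 2*v^2 - 1)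
    (huv : v^2 ≤ u^2) :
    2*k*u^2 + 2*u*Real.sqrt (1 - u^2) ≤ 2*k*v^2 + 2*v*Real.sqrt (1 - v^2) := by
  have hcs := aux_cs u v hu0 hu1 hv0 hv1
  have h2 : (0:ℝ) ≤ 1 - v^2 := by nlinarith
  have s2 : (Real.sqrt (1 - v^2))^2 = 1 - v^2 := Real.sq_sqrt h2
  have hv2 : v^2*(Real.sqrt (1 - v^2))^2 = v^2*(1-v^2) := by rw [s2]
  have hintA : 0 ≤ (u^2 - v^2) * (2*v^2 - 1 - 2*k*(v*Real.sqrt (1 - v^2))) :=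
    mul_nonneg (sub_nonneg.2 huv) (sub_nonneg.2 hslope)
  have key : (2*k*u^2 + 2*u*Real.sqrt (1 - u^2)
      - (2*k*v^2 + 2*(v*Real.sqrt (1 - v^2)))) * (2*(v*Real.sqrt (1 - v^2))) ≤ 0 := by
    nlinarith [hcs, hintA, hv2]
  by_contra hcon
  push_neg at hcon
  nlinarith [mul_pos (sub_pos.2 hcon) (by linarith : (0:ℝ) < 2*(v*Real.sqrt (1 - v^2)))]


set_option maxHeartbeats 1000000 in
/-- Theorem 2 (Scenario `K = A a² + D(b² − c²) > 0`) of the suboptimal energy-beamforming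
problem `P5`: the maximizer of
`γ(x) = min ((A a² + C a²) x², (A a² + D(b² − c²)) x² + 2 D b c x √(1 − x²) + D c²)`
over `[0,1]` in the three cases, with `k = K/(2Dbc)`,
`x̂ = √(1/2 + k²/(2√(k² + k⁴)))` and threshold `T(k)`. -/
theorem beamforming_scenario_pos (a b c A C D : ℝ)
    (ha : 0 < a) (hb : 0 < b) (hc : 0 < c) (hA : 0 < A) (hC : 0 < C) (hD : 0 < D)
    (hK : 0 < A * a ^ 2 + D * (b ^ 2 - c ^ 2)) :
    (let γ : ℝ → ℝ := fun x =>
      min ((A * a ^ 2 + C * a ^ 2) * x ^ 2)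
        ((A * a ^ 2 + D * (b ^ 2 - c ^ 2)) * x ^ 2
          + 2 * D * b * c * x * Real.sqrt (1 - x ^ 2) + D * c ^ 2);
    let k : ℝ := (A * a ^ 2 + D * (b ^ 2 - c ^ 2)) / (2 * D * b * c);
    let xhat : ℝ := Real.sqrt (1 / 2 + k ^ 2 / (2 * Real.sqrt (k ^ 2 + k ^ 4)));
    let T : ℝ := (D * b * c * (k + Real.sqrt (1 / (1 + k ^ 2))
        + k ^ 3 / Real.sqrt (k ^ 2 + k ^ 4)) + D * c ^ 2)
      / (1 / 2 + k ^ 2 / (2 * Real.sqrt (k ^ 2 + k ^ 4)));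
    (A * a ^ 2 + C * a ^ 2 ≤ 2 * D * b * c * k + D * c ^ 2 →
      (1 : ℝ) ∈ Set.Icc (0:ℝ) 1 ∧ IsMaxOn γ (Set.Icc (0:ℝ) 1) 1 ∧
      γ 1 = A * a ^ 2 + C * a ^ 2) ∧
    (2 * D * b * c * k + D * c ^ 2 < A * a ^ 2 + C * a ^ 2 ∧ A * a ^ 2 + C * a ^ 2 < T →
      c * Real.sqrt D / Real.sqrt ((a * Real.sqrt C - b * Real.sqrt D) ^ 2 + D * c ^ 2)
        ∈ Set.Icc (0:ℝ) 1 ∧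
      IsMaxOn γ (Set.Icc (0:ℝ) 1)
        (c * Real.sqrt D / Real.sqrt ((a * Real.sqrt C - b * Real.sqrt D) ^ 2 + D * c ^ 2)) ∧
      γ (c * Real.sqrt D / Real.sqrt ((a * Real.sqrt C - b * Real.sqrt D) ^ 2 + D * c ^ 2))
        = D * (A + C) * a ^ 2 * c ^ 2
            / ((a * Real.sqrt C - b * Real.sqrt D) ^ 2 + D * c ^ 2)) ∧
    (T ≤ A * a ^ 2 + C * a ^ 2 →
      xhat ∈ Set.Icc (0:ℝ) 1 ∧ IsMaxOn γ (Set.Icc (0:ℝ) 1) xhat ∧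
      γ xhat = D * b * c * (k + Real.sqrt (1 / (1 + k ^ 2))
        + k ^ 3 / Real.sqrt (k ^ 2 + k ^ 4)) + D * c ^ 2)) := by
  set k : ℝ := (A * a ^ 2 + D * (b ^ 2 - c ^ 2)) / (2 * D * b * c) with hkdef
  have hk : 0 < k := div_pos hK (by positivity)
  have hKk : A * a ^ 2 + D * (b ^ 2 - c ^ 2) = 2 * D * b * c * k := by
    rw [hkdef]; field_simp
  clear_value k
  set r : ℝ := Real.sqrt (1 + k ^ 2) with hrdef
  have hr2 : r ^ 2 = 1 + k ^ 2 := Real.sq_sqrt (by positivity)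
  have hrpos : 0 < r := Real.sqrt_pos.2 (by positivity)
  clear_value r
  have hkr : k < r := by nlinarith [mul_self_nonneg (r - k)]
  have hsq1 : Real.sqrt (k ^ 2 + k ^ 4) = k * r := by
    rw [show k ^ 2 + k ^ 4 = k ^ 2 * (1 + k ^ 2) by ring, Real.sqrt_mul (sq_nonneg k),
      Real.sqrt_sq hk.le, hrdef]
  have hsq2 : Real.sqrt (1 / (1 + k ^ 2)) = 1 / r := by
    rw [one_div, Real.sqrt_inv, ← hrdef, one_div]
  have hfrac1 : 1 / 2 + k ^ 2 / (2 * (k * r)) = 1 / 2 + k / (2 * r) := by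
    rw [show k ^ 2 / (2 * (k * r)) = k / (2 * r) by
      field_simp]
  have hMe : D * b * c * (k + 1 / r + k ^ 3 / (k * r)) + D * c ^ 2
      = D * b * c * (k + r) + D * c ^ 2 := by
    have : k + 1 / r + k ^ 3 / (k * r) = k + r := by
      field_simp
      linear_combination (-1)*hr2
    rw [this]
  dsimp only
  rw [hsq1, hsq2, hfrac1, hMe]
  -- ==== shared facts ====
  have hbc : (0:ℝ) < D*b*c := by positivity
  have hS0 : (0:ℝ) ≤ A * a ^ 2 + C * a ^ 2 := by positivity
  have hX2pos : (0:ℝ) < 1/2 + k/(2*r) := by positivity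
  have hX2le1 : 1/2 + k/(2*r) ≤ 1 := by
    have : k/(2*r) ≤ 1/2 := by rw [div_le_iff₀ (by positivity)]; linarith
    linarith
  have hxhat2 : Real.sqrt (1/2 + k/(2*r)) ^ 2 = 1/2 + k/(2*r) := Real.sq_sqrt hX2pos.le
  have hprod : Real.sqrt (1/2 + k/(2*r)) * Real.sqrt (1 - (1/2 + k/(2*r))) = 1/(2*r) := by
    rw [← Real.sqrt_mul hX2pos.le,
      show (1/2 + k/(2*r)) * (1 - (1/2 + k/(2*r))) = (1/(2*r))^2 by
        field_simp; linear_combination hr2]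
    exact Real.sqrt_sq (by positivity)
  have hgxhat : (A*a^2 + D*(b^2 - c^2))*(1/2 + k/(2*r)) + 2*D*b*c*(1/(2*r)) + D*c^2
      = D*b*c*(k + r) + D*c^2 := by
    rw [hKk]; field_simp; linear_combination (-b)*hr2
  refine ⟨?_, ?_, ?_⟩
  -- ==== Part (i) ====
  · intro h1
    have hval1 : min ((A*a^2 + C*a^2)*(1:ℝ)^2)
        ((A*a^2 + D*(b^2 - c^2))*(1:ℝ)^2 + 2*D*b*c*1*Real.sqrt (1 - (1:ℝ)^2) + D*c^2)
        = A*a^2 + C*a^2 := by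
      rw [show (1:ℝ) - (1:ℝ)^2 = 0 by norm_num, Real.sqrt_zero]
      rw [min_eq_left (by linarith [hKk, h1])]
      norm_num
    refine ⟨Set.mem_Icc.2 ⟨zero_le_one, le_refl 1⟩, ?_, hval1⟩
    rw [isMaxOn_iff]
    intro u hu
    obtain ⟨hu0, hu1⟩ := Set.mem_Icc.1 hu
    rw [hval1]
    refine le_trans (min_le_left _ _) ?_
    have hu2 : u^2 ≤ 1 := by nlinarith [hu0, hu1]
    have := mul_le_mul_of_nonneg_left hu2 hS0
    linarith
  -- ==== Part (ii) ====
  · rintro ⟨h2a, h2b⟩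
    set sC := Real.sqrt C with hsCdef
    set sD := Real.sqrt D with hsDdef
    have hsC : sC^2 = C := Real.sq_sqrt hC.le
    have hsD : sD^2 = D := Real.sq_sqrt hD.le
    have hsCpos : 0 < sC := Real.sqrt_pos.2 hC
    have hsDpos : 0 < sD := Real.sqrt_pos.2 hD
    clear_value sC sD
    have hDb : D*b^2 < C*a^2 := by linarith [hKk, h2a]
    have hE : 0 < a*sC - b*sD := by
      have e1 : (b*sD)^2 = D*b^2 := by rw [mul_pow, hsD]; ring
      have e2 : (a*sC)^2 = C*a^2 := by rw [mul_pow, hsC]; ring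
      have h1 : (b*sD)^2 < (a*sC)^2 := by rw [e1, e2]; exact hDb
      have := lt_of_pow_lt_pow_left₀ 2 (by positivity : (0:ℝ) ≤ a*sC) h1
      linarith
    set den := (a*sC - b*sD)^2 + D*c^2 with hden_def
    have hdenpos : 0 < den := by rw [hden_def]; positivity
    clear_value den
    set sden := Real.sqrt den with hsden_def
    have hsden2 : sden^2 = den := Real.sq_sqrt hdenpos.le
    have hsdenpos : 0 < sden := Real.sqrt_pos.2 hdenpos
    clear_value sden
    set xs := c*sD/sden with hxsdef
    have hxs0 : 0 ≤ xs := by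
      rw [hxsdef]; exact div_nonneg (mul_nonneg hc.le hsDpos.le) hsdenpos.le
    clear_value xs
    have hxs2 : xs^2 = D*c^2/den := by
      rw [hxsdef, div_pow, mul_pow, hsD, hsden2]; ring
    have hxs2le1 : xs^2 ≤ 1 := by
      rw [hxs2, div_le_one hdenpos, hden_def]; linarith [sq_nonneg (a*sC - b*sD)]
    have hxs1 : xs ≤ 1 := by linarith [hxs2le1, sq_nonneg (xs - 1)]
    have hsqrt1m : Real.sqrt (1 - xs^2) = (a*sC - b*sD)/sden := by
      have h1m : 1 - xs^2 = ((a*sC - b*sD)/sden)^2 := by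
        rw [hxs2, div_pow, hsden2]
        field_simp
        linear_combination hden_def
      rw [h1m, Real.sqrt_sq (div_nonneg hE.le hsdenpos.le)]
    have hxw : xs * Real.sqrt (1 - xs^2) = c*sD*(a*sC - b*sD)/den := by
      rw [hsqrt1m, hxsdef, div_mul_div_comm, ← pow_two, hsden2]
    have h2b' : (A*a^2 + C*a^2)*(1/2 + k/(2*r)) < D*b*c*(k + r) + D*c^2 := by
      rw [lt_div_iff₀ hX2pos] at h2b; exact h2b
    have hS_id : A*a^2 + C*a^2
        = 2*D*b*c*k + D*c^2 + (a*sC - b*sD)^2 + 2*b*sD*(a*sC - b*sD) := by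
      linear_combination (-(a^2))*hsC + b^2*hsD + hKk
    have hEe : a*sC - b*sD ≤ c*sD*(r - k) := by
      by_contra hcon
      push_neg at hcon
      have hrk : 0 < r - k := by linarith
      have hQ : (c*sD*(r-k))^2 + 2*b*sD*(c*sD*(r-k))
          = D*c^2*(r-k)^2 + 2*D*b*c*(r-k) := by
        linear_combination (c^2*(r-k)^2 + 2*b*c*(r-k))*hsD
      have hmono : D*c^2*(r-k)^2 + 2*D*b*c*(r-k)
          < (a*sC - b*sD)^2 + 2*b*sD*(a*sC - b*sD) := by
        rw [← hQ]
        have t1 : 0 < ((a*sC - b*sD) - c*sD*(r-k))*((a*sC - b*sD) + c*sD*(r-k)) :=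
          mul_pos (by linarith) (by linarith [hE, mul_pos (mul_pos hc hsDpos) hrk])
        have t2 : 0 ≤ b*sD*((a*sC - b*sD) - c*sD*(r-k)) :=
          mul_nonneg (by positivity) (by linarith)
        linarith [t1, t2]
      have hS0X : (2*D*b*c*k + D*c^2 + (D*c^2*(r-k)^2 + 2*D*b*c*(r-k))) * (1/2 + k/(2*r))
          = D*b*c*(k + r) + D*c^2 := by
        have h2rne : (2*r) ≠ 0 := by positivity
        rw [show (1:ℝ)/2 + k/(2*r) = (r+k)/(2*r) by field_simp, ← mul_div_assoc,
          div_eq_iff h2rne]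
        linear_combination (D*c^2*(r-k))*hr2
      have hSX : D*b*c*(k + r) + D*c^2 < (A*a^2 + C*a^2)*(1/2 + k/(2*r)) := by
        rw [← hS0X]
        apply mul_lt_mul_of_pos_right _ hX2pos
        rw [hS_id]; linarith [hmono]
      linarith [h2b', hSX]
    have hslope : 2*k*(xs*Real.sqrt (1 - xs^2)) ≤ 2*xs^2 - 1 := by
      rw [hxw, hxs2]
      have hDc : D*c^2 = (c*sD*(r-k))^2 + 2*k*(c*sD)*(c*sD*(r-k)) := by
        linear_combination (-(c^2))*hsD + (-(c^2*sD^2))*hr2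
      have hsum : 0 ≤ c*sD*(r-k) + (a*sC - b*sD) + 2*k*(c*sD) := by
        have u1 : 0 ≤ c*sD*(r-k) := mul_nonneg (by positivity) (by linarith)
        have u2 : 0 ≤ 2*k*(c*sD) := by positivity
        linarith [hE]
      have hkey : 0 ≤ (c*sD*(r-k) - (a*sC - b*sD))*(c*sD*(r-k) + (a*sC - b*sD) + 2*k*(c*sD)) :=
        mul_nonneg (by linarith [hEe]) hsum
      have hnum : 2*k*(c*sD*(a*sC - b*sD)) ≤ 2*(D*c^2) - den := by
        rw [hden_def]; linarith [hDc, hkey]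
      rw [show 2*k*(c*sD*(a*sC - b*sD)/den) = 2*k*(c*sD*(a*sC - b*sD))/den by ring,
        show 2*(D*c^2/den) - 1 = (2*(D*c^2) - den)/den by field_simp]
      exact (div_le_div_iff_of_pos_right hdenpos).mpr hnum
    have hwpos : 0 < xs * Real.sqrt (1 - xs^2) := by
      rw [hxw]; exact div_pos (mul_pos (mul_pos hc hsDpos) hE) hdenpos
    have hfe : (A*a^2 + C*a^2)*xs^2 = D*(A+C)*a^2*c^2/den := by rw [hxs2]; ring
    have hge : (A*a^2 + D*(b^2 - c^2))*xs^2 + 2*D*b*c*(xs*Real.sqrt (1 - xs^2)) + D*c^2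
        = (A*a^2 + C*a^2)*xs^2 := by
      rw [hxw, hxs2, hKk]
      field_simp
      linear_combination (-1)*hS_id + hden_def
    have hgxsV : (A*a^2 + D*(b^2 - c^2))*xs^2 + 2*D*b*c*xs*Real.sqrt (1 - xs^2) + D*c^2
        = D*(A+C)*a^2*c^2/den := by
      rw [show 2*D*b*c*xs*Real.sqrt (1 - xs^2) = 2*D*b*c*(xs*Real.sqrt (1 - xs^2)) by ring,
        hge, hfe]
    have hval2 : min ((A*a^2 + C*a^2)*xs^2)
        ((A*a^2 + D*(b^2 - c^2))*xs^2 + 2*D*b*c*xs*Real.sqrt (1 - xs^2) + D*c^2)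
        = D*(A+C)*a^2*c^2/den := by
      rw [hgxsV, hfe, min_self]
    refine ⟨Set.mem_Icc.2 ⟨hxs0, hxs1⟩, ?_, hval2⟩
    rw [isMaxOn_iff]
    intro u hu
    obtain ⟨hu0, hu1⟩ := Set.mem_Icc.1 hu
    rw [hval2]
    rcases le_or_gt (u^2) (xs^2) with hcase | hcase
    · refine le_trans (min_le_left _ _) ?_
      calc (A*a^2 + C*a^2)*u^2 ≤ (A*a^2 + C*a^2)*xs^2 :=
            mul_le_mul_of_nonneg_left hcase hS0
        _ = D*(A+C)*a^2*c^2/den := hfe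
    · refine le_trans (min_le_right _ _) ?_
      have htan := aux_tangent k u xs hk hu0 hu1 hxs0 hxs1 hwpos hslope hcase.le
      have hgu : (A*a^2 + D*(b^2 - c^2))*u^2 + 2*D*b*c*u*Real.sqrt (1 - u^2) + D*c^2
          ≤ (A*a^2 + D*(b^2 - c^2))*xs^2 + 2*D*b*c*xs*Real.sqrt (1 - xs^2) + D*c^2 := by
        rw [hKk]
        linarith [mul_le_mul_of_nonneg_left htan (show (0:ℝ) ≤ D*b*c by positivity)]
      exact hgu.trans_eq hgxsV
  -- ==== Part (iii) ====
  · intro h3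
    have hMS : D*b*c*(k + r) + D*c^2 ≤ (A*a^2 + C*a^2)*(1/2 + k/(2*r)) := by
      rw [div_le_iff₀ hX2pos] at h3; exact h3
    have hval3 : min ((A*a^2 + C*a^2)*Real.sqrt (1/2 + k/(2*r))^2)
        ((A*a^2 + D*(b^2 - c^2))*Real.sqrt (1/2 + k/(2*r))^2
          + 2*D*b*c*Real.sqrt (1/2 + k/(2*r))*Real.sqrt (1 - Real.sqrt (1/2 + k/(2*r))^2)
          + D*c^2) = D*b*c*(k + r) + D*c^2 := by
      rw [hxhat2]
      rw [show 2*D*b*c*Real.sqrt (1/2 + k/(2*r))*Real.sqrt (1 - (1/2 + k/(2*r)))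
          = 2*D*b*c*(Real.sqrt (1/2 + k/(2*r))*Real.sqrt (1 - (1/2 + k/(2*r)))) by ring,
        hprod, hgxhat]
      exact min_eq_right hMS
    refine ⟨Set.mem_Icc.2 ⟨Real.sqrt_nonneg _, Real.sqrt_le_one.mpr hX2le1⟩, ?_, hval3⟩
    rw [isMaxOn_iff]
    intro u hu
    obtain ⟨hu0, hu1⟩ := Set.mem_Icc.1 hu
    rw [hval3]
    refine le_trans (min_le_right _ _) ?_
    have hg := aux_max k u hk hu0 hu1
    rw [← hrdef] at hg
    rw [hKk]
    linarith [mul_le_mul_of_nonneg_left hg (show (0:ℝ) ≤ D*b*c by positivity)]
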